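/- Let n be a positive integer and p a prime not dividing n. Then Φ_{np}(x) = gcd(1 + x^n + x^{2n} + … + x^{n(p-1)}, Φ_n(x^p)) in ℤ[x]. -/

import Mathlib

open Polynomial

theorem cyclotomic_np_eq_gcd (n p : ℕ) (hn : 0 < n) (hp : p.Prime) (hpn : ¬ p ∣ n) :
    (Polynomial.cyclotomic (n * p) ℤ ∣
        ∑ i ∈ Finset.range p, (Polynomial.X : Polynomial ℤ) ^ (n * i)) ∧
    (Polynomial.cyclotomic (n * p) ℤ ∣
        (Polynomial.expand ℤ p) (Polynomial.cyclotomic n ℤ)) ∧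
    ∀ g : Polynomial ℤ,
      g ∣ (∑ i ∈ Finset.range p, (Polynomial.X : Polynomial ℤ) ^ (n * i)) →
      g ∣ (Polynomial.expand ℤ p) (Polynomial.cyclotomic n ℤ) →
        g ∣ Polynomial.cyclotomic (n * p) ℤ := by
  have hnp : 0 < n * p := Nat.mul_pos hn hp.pos
  set S : ℤ[X] := ∑ i ∈ Finset.range p, (X : ℤ[X]) ^ (n * i) with hSdef
  have hS : S * ((X : ℤ[X]) ^ n - 1) = X ^ (n * p) - 1 := by
    rw [hSdef]
    simp_rw [pow_mul]
    rw [geom_sum_mul, ← pow_mul]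
  have hXn : ((X : ℤ[X]) ^ n - 1) ≠ 0 := by
    have := X_pow_sub_C_ne_zero (R := ℤ) hn (1 : ℤ)
    simpa using this
  -- part 1
  have h1 : cyclotomic (n * p) ℤ ∣ S := by
    have hprod := prod_cyclotomic_eq_X_pow_sub_one hnp ℤ
    have hmem : n * p ∈ (n * p).divisors := Nat.mem_divisors_self _ hnp.ne'
    have hsub : n.divisors ⊆ (n * p).divisors.erase (n * p) := by
      intro d hd
      rw [Nat.mem_divisors] at hd
      rw [Finset.mem_erase, Nat.mem_divisors]
      refine ⟨?_, hd.1.mul_right p, hnp.ne'⟩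
      intro hdeq
      have hle : d ≤ n := Nat.le_of_dvd hn hd.1
      have : n < n * p := lt_mul_of_one_lt_right hn hp.one_lt
      omega
    have hdvd2 : (X : ℤ[X]) ^ n - 1 ∣ ∏ d ∈ (n * p).divisors.erase (n * p), cyclotomic d ℤ := by
      rw [← prod_cyclotomic_eq_X_pow_sub_one hn ℤ]
      exact Finset.prod_dvd_prod_of_subset _ _ _ hsub
    have key : cyclotomic (n * p) ℤ * ((X : ℤ[X]) ^ n - 1) ∣ X ^ (n * p) - 1 := by
      rw [← hprod, ← Finset.mul_prod_erase _ _ hmem]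
      exact mul_dvd_mul_left _ hdvd2
    rw [← hS] at key
    exact (mul_dvd_mul_iff_right hXn).mp key
  -- part 2
  have hexp : (expand ℤ p) (cyclotomic n ℤ) = cyclotomic (n * p) ℤ * cyclotomic n ℤ :=
    cyclotomic_expand_eq_cyclotomic_mul hp hpn ℤ
  refine ⟨h1, hexp ▸ dvd_mul_right _ _, ?_⟩
  -- part 3
  intro g hgS hgE
  have hSmonic : S.Monic := by
    have hnp' : (X : ℤ[X]) ^ (n * p) - 1 = X ^ (n * p) - C 1 := by simp
    have hmon : ((X : ℤ[X]) ^ (n * p) - 1).Monic := by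
      rw [hnp']; exact monic_X_pow_sub_C 1 hnp.ne'
    have hmon' : ((X : ℤ[X]) ^ n - 1).Monic := by
      have : (X : ℤ[X]) ^ n - 1 = X ^ n - C 1 := by simp
      rw [this]; exact monic_X_pow_sub_C 1 hn.ne'
    exact hmon'.of_mul_monic_left (by rw [mul_comm, hS]; exact hmon)
  have hgprim : g.IsPrimitive := fun r hr => hSmonic.isPrimitive r (hr.trans hgS)
  -- move to ℚ
  have hsep : ((X : ℚ[X]) ^ (n * p) - 1).Separable := by
    have : ((X : ℚ[X]) ^ (n * p) - C 1).Separable := by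
      refine separable_X_pow_sub_C 1 ?_ one_ne_zero
      exact_mod_cast hnp.ne'
    simpa using this
  have hSQ : (S.map (Int.castRingHom ℚ)) * ((X : ℚ[X]) ^ n - 1) = (X : ℚ[X]) ^ (n * p) - 1 := by
    have := congrArg (Polynomial.map (Int.castRingHom ℚ)) hS
    simpa [Polynomial.map_mul] using this
  have hcop1 : IsCoprime (S.map (Int.castRingHom ℚ)) ((X : ℚ[X]) ^ n - 1) := by
    apply Polynomial.Separable.isCoprime
    rw [hSQ]; exact hsep
  have hcop2 : IsCoprime (S.map (Int.castRingHom ℚ)) (cyclotomic n ℚ) :=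
    hcop1.of_isCoprime_of_dvd_right (cyclotomic.dvd_X_pow_sub_one n ℚ)
  have hgQS : g.map (Int.castRingHom ℚ) ∣ S.map (Int.castRingHom ℚ) :=
    Polynomial.map_dvd _ hgS
  have hcopg : IsCoprime (g.map (Int.castRingHom ℚ)) (cyclotomic n ℚ) :=
    hcop2.of_isCoprime_of_dvd_left hgQS
  have hgQE : g.map (Int.castRingHom ℚ) ∣ cyclotomic (n * p) ℚ * cyclotomic n ℚ := by
    have := Polynomial.map_dvd (Int.castRingHom ℚ) hgE
    rwa [hexp, Polynomial.map_mul, map_cyclotomic, map_cyclotomic] at this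
  have hgQ : g.map (Int.castRingHom ℚ) ∣ cyclotomic (n * p) ℚ :=
    hcopg.dvd_of_dvd_mul_right hgQE
  have := (IsPrimitive.Int.dvd_iff_map_cast_dvd_map_cast g (cyclotomic (n * p) ℤ) hgprim
    ).mpr
  apply this
  rwa [map_cyclotomic]
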